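/- arXiv:1903.10889 — 2 statements merged into one kernel-verified Lean document; each statement's English description precedes it below -/
import Mathlib

section
/- For r₁ > 1, r₂ > 1 and x₁, x₂ > 0, under the prior π(λ₁,λ₂) = 1/(λ₁λ₂) restricted to 0 < λ₂ ≤ λ₁, the normalizing constant of the joint posterior is C(r₁-1, x₁, r₂-1, x₂)/((r₁-1)(r₂-1)), where C(k₁,k₂,s₁,s₂) = ∫₀^∞ (1/ξ₁) m(s₁,s₂;ξ₁) IG_{k₁,k₂}(ξ₁) dξ₁ and m(s₁,s₂;ξ̄) = ∫₀^{ξ̄} (1/ξ) IG_{s₁,s₂}(ξ) dξ. That is, ∫₀^∞ ∫₀^{λ₁} (1/(λ₁λ₂)) p_{r₁,λ₁}(x₁) p_{r₂,λ₂}(x₂) dλ₂ dλ₁ = C(r₁-1, x₁, r₂-1, x₂)/((r₁-1)(r₂-1)). -/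
open Real MeasureTheory

/-- Inverse-gamma density `IG_{a,b}(ξ) = b^a ξ^{-a-1} e^{-b/ξ} / Γ(a)`. -/
noncomputable def invGammaPdf (a b ξ : ℝ) : ℝ :=
  b ^ a * ξ ^ (-a - 1) * Real.exp (-(b / ξ)) / Real.Gamma a

/-- Gamma density `p_{r,λ}(x) = x^{r-1} e^{-x/λ} / (Γ(r) λ^r)`. -/
noncomputable def gammaPdf (r lam x : ℝ) : ℝ :=
  x ^ (r - 1) * Real.exp (-(x / lam)) / (Real.Gamma r * lam ^ r)

/-- Truncated mixture `m(s₁, s₂; ξ̄) = ∫₀^{ξ̄} (1/ξ) IG_{s₁,s₂}(ξ) dξ`. -/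
noncomputable def mTrunc (s₁ s₂ ξbar : ℝ) : ℝ :=
  ∫ ξ in (0 : ℝ)..ξbar, (1 / ξ) * invGammaPdf s₁ s₂ ξ

/-- `C(k₁,k₂,s₁,s₂) = ∫₀^∞ (1/ξ₁) m(s₁,s₂;ξ₁) IG_{k₁,k₂}(ξ₁) dξ₁`. -/
noncomputable def Cmix (k₁ k₂ s₁ s₂ : ℝ) : ℝ :=
  ∫ ξ₁ in Set.Ioi (0 : ℝ), (1 / ξ₁) * mTrunc s₁ s₂ ξ₁ * invGammaPdf k₁ k₂ ξ₁

/-- Pointwise identity relating the gamma pdf in `λ` to an inverse-gamma pdf. -/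
lemma gammaPdf_eq_invGammaPdf (r x lam : ℝ) (hr : 1 < r) (hlam : 0 ≤ lam) :
    gammaPdf r lam x = invGammaPdf (r - 1) x lam / (r - 1) := by
  have hr1 : (0 : ℝ) < r - 1 := by linarith
  have hΓ : Real.Gamma r = (r - 1) * Real.Gamma (r - 1) := by
    have := Real.Gamma_add_one (s := r - 1) (by positivity)
    simpa [sub_add_cancel] using this
  have hΓpos : 0 < Real.Gamma (r - 1) := Real.Gamma_pos_of_pos hr1
  rcases eq_or_lt_of_le hlam with h0 | hpos
  · subst h0
    simp [gammaPdf, invGammaPdf, Real.zero_rpow (by positivity : r ≠ 0),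
      Real.zero_rpow (show -(r - 1) - 1 ≠ 0 by intro h; nlinarith),
      Real.zero_rpow (show (-r : ℝ) ≠ 0 by intro h; nlinarith)]
  · unfold gammaPdf invGammaPdf
    have hpow : lam ^ (-(r - 1) - 1) = (lam ^ r)⁻¹ := by
      rw [show -(r - 1) - 1 = -r by ring, Real.rpow_neg hpos.le]
    have hlr : lam ^ r ≠ 0 := by positivity
    rw [hpow, hΓ]
    field_simp

theorem joint_posterior_normalizing_constant (r₁ r₂ x₁ x₂ : ℝ)
    (hr₁ : 1 < r₁) (hr₂ : 1 < r₂) (hx₁ : 0 < x₁) (hx₂ : 0 < x₂) :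
    ∫ lam₁ in Set.Ioi (0 : ℝ),
        ∫ lam₂ in (0 : ℝ)..lam₁,
          (1 / (lam₁ * lam₂)) * gammaPdf r₁ lam₁ x₁ * gammaPdf r₂ lam₂ x₂ =
      Cmix (r₁ - 1) x₁ (r₂ - 1) x₂ / ((r₁ - 1) * (r₂ - 1)) := by
  have key : ∀ lam₁ ∈ Set.Ioi (0 : ℝ),
      (∫ lam₂ in (0 : ℝ)..lam₁,
          (1 / (lam₁ * lam₂)) * gammaPdf r₁ lam₁ x₁ * gammaPdf r₂ lam₂ x₂)
        = (1 / ((r₁ - 1) * (r₂ - 1))) *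
            ((1 / lam₁) * mTrunc (r₂ - 1) x₂ lam₁ * invGammaPdf (r₁ - 1) x₁ lam₁) := by
    intro lam₁ hlam₁
    rw [Set.mem_Ioi] at hlam₁
    have hinner : ∀ lam₂ ∈ Set.uIcc (0 : ℝ) lam₁,
        (1 / (lam₁ * lam₂)) * gammaPdf r₁ lam₁ x₁ * gammaPdf r₂ lam₂ x₂
          = (gammaPdf r₁ lam₁ x₁ / (lam₁ * (r₂ - 1))) *
              ((1 / lam₂) * invGammaPdf (r₂ - 1) x₂ lam₂) := by
      intro lam₂ hmem
      have h0 : (0 : ℝ) ≤ lam₂ := by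
        rw [Set.uIcc_of_le hlam₁.le] at hmem
        exact hmem.1
      rw [gammaPdf_eq_invGammaPdf r₂ x₂ lam₂ hr₂ h0]
      field_simp
    rw [intervalIntegral.integral_congr hinner, intervalIntegral.integral_const_mul,
      gammaPdf_eq_invGammaPdf r₁ x₁ lam₁ hr₁ hlam₁.le]
    unfold mTrunc
    field_simp
  rw [MeasureTheory.setIntegral_congr_fun measurableSet_Ioi key,
    MeasureTheory.integral_const_mul]
  rw [show (∫ ξ₁ in Set.Ioi (0:ℝ),
      (1 / ξ₁) * mTrunc (r₂ - 1) x₂ ξ₁ * invGammaPdf (r₁ - 1) x₁ ξ₁)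
      = Cmix (r₁ - 1) x₁ (r₂ - 1) x₂ from rfl, one_div_mul_eq_div]
end

section
/- For k₁ > 0, s₁ > 0, k₂ > 0, s₂ > 0, the double-prior mixture C(k₁, k₂, s₁, s₂) = ∫₀^∞ (1/ξ₁) m(s₁, s₂; ξ₁) IG_{k₁,k₂}(ξ₁) dξ₁, with m(s₁,s₂;ξ₁) = Γ(s₁+1, s₂/ξ₁)/(s₂ Γ(s₁)), equals k₁ k₂^{k₁} s₂^{-k₁-2} Γ(k₁+s₁+2) · ₂F̃₁(k₁+1, k₁+s₁+2; k₁+2; -k₂/s₂) / Γ(s₁), where ₂F̃₁ is the regularized Gauss hypergeometric function (analytically continued to negative argument). -/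
open Real MeasureTheory

/-- Upper incomplete gamma function `Γ(m, n) = ∫_n^∞ t^{m-1} e^{-t} dt`. -/
noncomputable def upperGamma (m n : ℝ) : ℝ :=
  ∫ t in Set.Ioi n, t ^ (m - 1) * Real.exp (-t)

/-- Regularized Gauss hypergeometric function `₂F̃₁(a,b;c;z) = ₂F₁(a,b;c;z)/Γ(c)`,
given (for `c - a > 0`, `a > 0`, real `z < 1`, in particular negative `z`) by the
Euler integral representation, which provides the analytic continuation:
`₂F̃₁(a,b;c;z) = (1/(Γ(a)Γ(c-a))) ∫₀¹ t^{a-1} (1-t)^{c-a-1} (1-zt)^{-b} dt`. -/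
noncomputable def reg2F1 (a b c z : ℝ) : ℝ :=
  (1 / (Real.Gamma a * Real.Gamma (c - a))) *
    ∫ t in (0 : ℝ)..1, t ^ (a - 1) * (1 - t) ^ (c - a - 1) * (1 - z * t) ^ (-b)

lemma intOn_aux {s r : ℝ} (hs : -1 < s) (hr : 0 < r) :
    IntegrableOn (fun x : ℝ => x ^ s * Real.exp (-(r * x))) (Set.Ioi 0) := by
  have h := integrableOn_rpow_mul_exp_neg_mul_rpow hs (zero_lt_one : (0:ℝ) < 1) hr
  simpa [Real.rpow_one, neg_mul] using h

lemma upperGamma_scale {s x : ℝ} (hx : 0 < x) :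
    (∫ t in Set.Ioi x, t ^ s * Real.exp (-t)) =
      x ^ (s + 1) * ∫ v in Set.Ioi (1:ℝ), v ^ s * Real.exp (-(x * v)) := by
  have h := integral_comp_mul_left_Ioi (fun t => t ^ s * Real.exp (-t)) 1 hx
  rw [mul_one, smul_eq_mul] at h
  have h3 : (∫ t in Set.Ioi x, t ^ s * Real.exp (-t)) =
      x * ∫ v in Set.Ioi (1:ℝ), (x * v) ^ s * Real.exp (-(x * v)) := by
    rw [h, ← mul_assoc, mul_inv_cancel₀ hx.ne', one_mul]
  rw [h3]
  have h4 : (∫ v in Set.Ioi (1:ℝ), (x * v) ^ s * Real.exp (-(x * v))) =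
      x ^ s * ∫ v in Set.Ioi (1:ℝ), v ^ s * Real.exp (-(x * v)) := by
    rw [← integral_const_mul]
    refine setIntegral_congr_fun measurableSet_Ioi fun v hv => ?_
    rw [Real.mul_rpow hx.le (zero_lt_one.trans hv).le]
    ring
  rw [h4, Real.rpow_add_one hx.ne']; ring

lemma key_swap {a s p q : ℝ} (ha : 0 < a) (hs : -1 < s) (hp : 0 < p) (hq : 0 < q) :
    (∫ u in Set.Ioi (0:ℝ), u ^ (a - 1) * Real.exp (-(p * u)) *
        (∫ v in Set.Ioi (1:ℝ), v ^ s * Real.exp (-(q * u * v)))) =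
      ∫ v in Set.Ioi (1:ℝ), v ^ s * ((1 / (p + q * v)) ^ a * Real.Gamma a) := by
  have measH : Measurable fun w : ℝ × ℝ =>
      w.1 ^ (a-1) * Real.exp (-(p * w.1)) * (w.2 ^ s * Real.exp (-(q * w.1 * w.2))) := by
    fun_prop
  have measG : StronglyMeasurable fun u : ℝ =>
      ∫ v in Set.Ioi (1:ℝ), v ^ s * Real.exp (-(q * u * v)) := by
    apply MeasureTheory.StronglyMeasurable.integral_prod_right
      (f := fun u v => v ^ s * Real.exp (-(q * u * v)))
    exact (by fun_prop : Measurable fun w : ℝ × ℝ =>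
      w.2 ^ s * Real.exp (-(q * w.1 * w.2))).stronglyMeasurable
  have hGnn : ∀ u : ℝ, 0 ≤ ∫ v in Set.Ioi (1:ℝ), v ^ s * Real.exp (-(q * u * v)) := fun u =>
    setIntegral_nonneg measurableSet_Ioi fun v hv => by
      have hv' : (0:ℝ) < v := lt_trans zero_lt_one hv
      positivity
  have measF : AEStronglyMeasurable (fun u : ℝ => u ^ (a-1) * Real.exp (-(p * u)) *
      (∫ v in Set.Ioi (1:ℝ), v ^ s * Real.exp (-(q * u * v)))) (volume.restrict (Set.Ioi 0)) :=
    ((by fun_prop : Measurable fun u : ℝ =>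
        u ^ (a-1) * Real.exp (-(p * u))).stronglyMeasurable.mul measG).aestronglyMeasurable
  -- convert LHS to iterated lintegral
  rw [integral_eq_lintegral_of_nonneg_ae
      ((ae_restrict_iff' measurableSet_Ioi).2 (Filter.Eventually.of_forall fun u hu => by
        have hu' : (0:ℝ) < u := hu
        have h1 : (0:ℝ) ≤ u ^ (a-1) * Real.exp (-(p * u)) := by positivity
        exact mul_nonneg h1 (hGnn u)))
      measF]
  have step1 : (∫⁻ u in Set.Ioi (0:ℝ), ENNReal.ofReal (u ^ (a-1) * Real.exp (-(p * u)) *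
        (∫ v in Set.Ioi (1:ℝ), v ^ s * Real.exp (-(q * u * v))))) =
      ∫⁻ u in Set.Ioi (0:ℝ), ∫⁻ v in Set.Ioi (1:ℝ), ENNReal.ofReal
        (u ^ (a-1) * Real.exp (-(p * u)) * (v ^ s * Real.exp (-(q * u * v)))) := by
    refine setLIntegral_congr_fun measurableSet_Ioi (fun u hu => ?_)
    have hu' : (0:ℝ) < u := hu
    have hc1 : (0:ℝ) ≤ u ^ (a-1) * Real.exp (-(p * u)) := by positivity
    rw [ENNReal.ofReal_mul hc1]
    have hint : IntegrableOn (fun v : ℝ => v ^ s * Real.exp (-(q * u * v))) (Set.Ioi 1) := by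
      have := (intOn_aux hs (mul_pos hq hu' : (0:ℝ) < q * u)).mono_set
        (Set.Ioi_subset_Ioi zero_le_one)
      simpa [mul_assoc] using this
    rw [ofReal_integral_eq_lintegral_ofReal hint
      ((ae_restrict_iff' measurableSet_Ioi).2 (Filter.Eventually.of_forall fun v hv => by
        have hv' : (0:ℝ) < v := lt_trans zero_lt_one hv
        positivity))]
    rw [← lintegral_const_mul' _ _ ENNReal.ofReal_ne_top]
    refine lintegral_congr fun v => ?_
    rw [← ENNReal.ofReal_mul hc1]
  rw [step1, lintegral_lintegral_swap (measH.ennreal_ofReal.aemeasurable)]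
  have step2 : (∫⁻ v in Set.Ioi (1:ℝ), ∫⁻ u in Set.Ioi (0:ℝ), ENNReal.ofReal
        (u ^ (a-1) * Real.exp (-(p * u)) * (v ^ s * Real.exp (-(q * u * v))))) =
      ∫⁻ v in Set.Ioi (1:ℝ), ENNReal.ofReal (v ^ s * ((1 / (p + q * v)) ^ a * Real.Gamma a)) := by
    refine setLIntegral_congr_fun measurableSet_Ioi (fun v hv => ?_)
    have hv' : (0:ℝ) < v := lt_trans zero_lt_one hv
    have hpv : (0:ℝ) < p + q * v := by positivity
    have e1 : (∫⁻ u in Set.Ioi (0:ℝ), ENNReal.ofReal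
        (u ^ (a-1) * Real.exp (-(p * u)) * (v ^ s * Real.exp (-(q * u * v))))) =
        ∫⁻ u in Set.Ioi (0:ℝ), ENNReal.ofReal (v ^ s) *
          ENNReal.ofReal (u ^ (a-1) * Real.exp (-((p + q * v) * u))) := by
      refine setLIntegral_congr_fun measurableSet_Ioi (fun u hu => ?_)
      rw [← ENNReal.ofReal_mul (by positivity : (0:ℝ) ≤ v ^ s)]
      congr 1
      have he : Real.exp (-(p*u)) * Real.exp (-(q*u*v)) = Real.exp (-((p+q*v)*u)) := by
        rw [← Real.exp_add]; ring_nf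
      rw [← he]; ring
    rw [e1, lintegral_const_mul' _ _ ENNReal.ofReal_ne_top,
      ← ofReal_integral_eq_lintegral_ofReal (intOn_aux (by linarith) hpv)
        ((ae_restrict_iff' measurableSet_Ioi).2 (Filter.Eventually.of_forall fun u hu => by
          have hu' : (0:ℝ) < u := hu
          positivity)),
      integral_rpow_mul_exp_neg_mul_Ioi ha hpv,
      ← ENNReal.ofReal_mul (by positivity : (0:ℝ) ≤ v ^ s)]
  rw [step2]
  rw [← integral_eq_lintegral_of_nonneg_ae
      ((ae_restrict_iff' measurableSet_Ioi).2 (Filter.Eventually.of_forall fun v hv => by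
        have hv' : (0:ℝ) < v := lt_trans zero_lt_one hv
        positivity))
      ((by fun_prop : Measurable fun v : ℝ =>
        v ^ s * ((1 / (p + q * v)) ^ a * Real.Gamma a)).aestronglyMeasurable)]

lemma sub_inv (g : ℝ → ℝ) :
    (∫ v in Set.Ioi (1:ℝ), g v) = ∫ t in Set.Ioo (0:ℝ) 1, (t ^ 2)⁻¹ * g t⁻¹ := by
  have himg : Inv.inv '' Set.Ioo (0:ℝ) 1 = Set.Ioi 1 := by
    ext x
    simp only [Set.mem_image, Set.mem_Ioo, Set.mem_Ioi]
    constructor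
    · rintro ⟨t, ⟨ht0, ht1⟩, rfl⟩; exact (one_lt_inv₀ ht0).2 ht1
    · intro hx
      exact ⟨x⁻¹, ⟨inv_pos.2 (lt_trans zero_lt_one hx), inv_lt_one_of_one_lt₀ hx⟩, inv_inv x⟩
  rw [← himg, integral_image_eq_integral_abs_deriv_smul measurableSet_Ioo
    (fun t ht => (hasDerivAt_inv (ne_of_gt ht.1)).hasDerivWithinAt)
    (fun t₁ _ t₂ _ h => inv_injective h) g]
  refine setIntegral_congr_fun measurableSet_Ioo fun t ht => ?_
  have ht0 : (0:ℝ) < t := ht.1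
  rw [smul_eq_mul, abs_neg, abs_inv, abs_of_pos (by positivity : (0:ℝ) < t ^ 2)]

lemma pointwise_lhs (k₁ k₂ s₁ s₂ u : ℝ) (hk₁ : 0 < k₁) (hs₁ : 0 < s₁) (hs₂ : 0 < s₂) (hu : 0 < u) :
    (|(-1:ℝ)| * u ^ ((-1:ℝ) - 1)) • ((1 / (u ^ (-1:ℝ))) *
        (upperGamma (s₁+1) (s₂ / u ^ (-1:ℝ)) / (s₂ * Real.Gamma s₁)) *
        invGammaPdf k₁ k₂ (u ^ (-1:ℝ))) =
      (s₂ ^ s₁ * k₂ ^ k₁ / (Real.Gamma s₁ * Real.Gamma k₁)) *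
        (u ^ (k₁ + s₁ + 2 - 1) * Real.exp (-(k₂ * u)) *
          ∫ v in Set.Ioi (1:ℝ), v ^ s₁ * Real.exp (-(s₂ * u * v))) := by
  simp only [upperGamma, invGammaPdf, Real.rpow_neg_one, add_sub_cancel_right]
  rw [show s₂ / u⁻¹ = s₂ * u by field_simp, show k₂ / u⁻¹ = k₂ * u by field_simp]
  rw [upperGamma_scale (mul_pos hs₂ hu)]
  rw [show (-k₁ - 1 : ℝ) = -(k₁+1) by ring, Real.inv_rpow hu.le, Real.rpow_neg hu.le, inv_inv]
  rw [Real.mul_rpow hs₂.le hu.le, Real.rpow_add_one hs₂.ne' s₁, smul_eq_mul, abs_neg, abs_one]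
  rw [show (1:ℝ) / u⁻¹ = u ^ (1:ℝ) by rw [Real.rpow_one]; field_simp]
  have hc : u ^ ((-1:ℝ)-1) * (u ^ (1:ℝ) * (u ^ (s₁+1) * u ^ (k₁+1))) =
      u ^ (k₁+s₁+2-1 : ℝ) := by
    rw [← Real.rpow_add hu, ← Real.rpow_add hu, ← Real.rpow_add hu,
      show ((-1:ℝ)-1) + (1 + ((s₁+1)+(k₁+1))) = k₁+s₁+2-1 by ring]
  conv_rhs => rw [← hc]
  field_simp [hs₂.ne', (Real.Gamma_pos_of_pos hs₁).ne', (Real.Gamma_pos_of_pos hk₁).ne']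

theorem double_prior_mixture_closed_form (k₁ k₂ s₁ s₂ : ℝ)
    (hk₁ : 0 < k₁) (hk₂ : 0 < k₂) (hs₁ : 0 < s₁) (hs₂ : 0 < s₂) :
    ∫ ξ₁ in Set.Ioi (0 : ℝ),
        (1 / ξ₁) * (upperGamma (s₁ + 1) (s₂ / ξ₁) / (s₂ * Real.Gamma s₁)) *
          invGammaPdf k₁ k₂ ξ₁ =
      k₁ * k₂ ^ k₁ * s₂ ^ (-k₁ - 2) * Real.Gamma (k₁ + s₁ + 2) *
        reg2F1 (k₁ + 1) (k₁ + s₁ + 2) (k₁ + 2) (-(k₂ / s₂)) / Real.Gamma s₁ := by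
  have hΓs₁ : (0:ℝ) < Real.Gamma s₁ := Real.Gamma_pos_of_pos hs₁
  have hΓk₁ : (0:ℝ) < Real.Gamma k₁ := Real.Gamma_pos_of_pos hk₁
  have hΓa : (0:ℝ) < Real.Gamma (k₁ + s₁ + 2) := Real.Gamma_pos_of_pos (by linarith)
  -- step 1 : invert the variable
  rw [← integral_comp_rpow_Ioi (fun ξ₁ =>
      (1 / ξ₁) * (upperGamma (s₁ + 1) (s₂ / ξ₁) / (s₂ * Real.Gamma s₁)) *
        invGammaPdf k₁ k₂ ξ₁) (p := -1) (by norm_num)]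
  rw [setIntegral_congr_fun measurableSet_Ioi
      (fun u hu => pointwise_lhs k₁ k₂ s₁ s₂ u hk₁ hs₁ hs₂ hu)]
  rw [integral_const_mul, key_swap (by linarith) (by linarith) hk₂ hs₂]
  -- step 2 : substitute v = 1/t
  rw [sub_inv (fun v => v ^ s₁ * ((1 / (k₂ + s₂ * v)) ^ (k₁+s₁+2) * Real.Gamma (k₁+s₁+2)))]
  have hsub : (∫ t in Set.Ioo (0:ℝ) 1, (t ^ 2)⁻¹ *
      ((t⁻¹) ^ s₁ * ((1 / (k₂ + s₂ * t⁻¹)) ^ (k₁+s₁+2) * Real.Gamma (k₁+s₁+2)))) =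
      (Real.Gamma (k₁+s₁+2) * s₂ ^ (-(k₁+s₁+2))) *
        ∫ t in Set.Ioo (0:ℝ) 1, t ^ k₁ * (1 + k₂/s₂ * t) ^ (-(k₁+s₁+2)) := by
    rw [← integral_const_mul]
    refine setIntegral_congr_fun measurableSet_Ioo fun t ht => ?_
    have ht0 : (0:ℝ) < t := ht.1
    have hb : (0:ℝ) < 1 + k₂/s₂ * t := by positivity
    have e1 : (1 : ℝ) / (k₂ + s₂ * t⁻¹) = t * (s₂⁻¹ * (1 + k₂/s₂ * t)⁻¹) := by
      rw [div_eq_iff (by positivity : (k₂ + s₂ * t⁻¹) ≠ 0)]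
      field_simp
      ring
    rw [e1, Real.mul_rpow ht0.le (by positivity),
      Real.mul_rpow (by positivity : (0:ℝ) ≤ s₂⁻¹) (by positivity),
      Real.inv_rpow hs₂.le, ← Real.rpow_neg hs₂.le,
      Real.inv_rpow hb.le, ← Real.rpow_neg hb.le,
      Real.inv_rpow ht0.le, ← Real.rpow_neg ht0.le,
      show ((t:ℝ) ^ 2)⁻¹ = t ^ ((-2):ℝ) by
        rw [Real.rpow_neg ht0.le, show ((2:ℝ)) = ((2:ℕ):ℝ) by norm_num, Real.rpow_natCast]]
    have hc : t ^ ((-2):ℝ) * (t ^ (-s₁) * t ^ (k₁+s₁+2 : ℝ)) = t ^ k₁ := by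
      rw [← Real.rpow_add ht0, ← Real.rpow_add ht0,
        show ((-2):ℝ) + (-s₁ + (k₁+s₁+2)) = k₁ by ring]
    conv_rhs => rw [← hc]
    ring
  rw [hsub]
  -- step 3 : unfold reg2F1
  have hreg : reg2F1 (k₁ + 1) (k₁ + s₁ + 2) (k₁ + 2) (-(k₂ / s₂)) =
      (1 / Real.Gamma (k₁ + 1)) *
        ∫ t in Set.Ioo (0:ℝ) 1, t ^ k₁ * (1 + k₂/s₂ * t) ^ (-(k₁+s₁+2)) := by
    rw [reg2F1, show (k₁+2-(k₁+1) : ℝ) = 1 by ring, Real.Gamma_one, mul_one,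
      show (k₁+1-1:ℝ) = k₁ by ring, show (1:ℝ) - 1 = 0 by norm_num,
      intervalIntegral.integral_of_le zero_le_one, MeasureTheory.integral_Ioc_eq_integral_Ioo]
    congr 1
    refine setIntegral_congr_fun measurableSet_Ioo fun t ht => ?_
    rw [Real.rpow_zero, mul_one, neg_mul, sub_neg_eq_add]
  rw [hreg, Real.Gamma_add_one hk₁.ne']
  have hspow : s₂ ^ (-k₁-2 : ℝ) = s₂ ^ s₁ * s₂ ^ (-(k₁+s₁+2)) := by
    rw [← Real.rpow_add hs₂]; ring_nf
  rw [hspow]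
  field_simp
end
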